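/- arXiv:2303.17083 — 2 statements merged into one kernel-verified Lean document; each statement's English description precedes it below -/
import Mathlib

section
/- Let λ > 0, α > 0, T > 0, and for each N let η = T/N and define s_N by the recursion s^{(k+1)} = s^{(k)}(1 − ηλ)² + α²η with s^{(0)} = 0, setting s_N = s^{(N)}. Then lim_{N→∞} s_N = (α²/(2λ))(1 − e^{−2λT}). -/
open Filter

lemma geom_step (A r : ℝ) (k : ℕ) (hd : (1 : ℝ) - r ^ 2 ≠ 0) :
    A / (1 - r ^ 2) * (1 - r ^ (2 * k)) * r ^ 2 + A
      = A / (1 - r ^ 2) * (1 - r ^ (2 * (k + 1))) := by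
  field_simp
  ring

lemma closed_form (lam α T : ℝ) (s : ℕ → ℕ → ℝ) (N : ℕ)
    (h0 : s N 0 = 0)
    (hrec : ∀ k, s N (k + 1) =
      s N k * (1 - (T / N) * lam) ^ 2 + α ^ 2 * (T / N))
    (hd : (1 : ℝ) - (1 - (T / N) * lam) ^ 2 ≠ 0) :
    ∀ k, s N k = α ^ 2 * (T / N) / (1 - (1 - (T / N) * lam) ^ 2)
        * (1 - (1 - (T / N) * lam) ^ (2 * k)) := by
  intro k
  induction k with
  | zero => simp [h0]
  | succ k ih =>
      rw [hrec, ih]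
      exact geom_step _ _ _ hd

/-- Running the variance recursion N steps with step size η = T/N and letting N → ∞
gives the limit (α²/(2λ))(1 − e^{−2λT}). -/
theorem scalar_variance_recursion_limit
    (lam α T : ℝ) (hlam : 0 < lam) (hα : 0 < α) (hT : 0 < T)
    (s : ℕ → ℕ → ℝ)
    (h0 : ∀ N, s N 0 = 0)
    (hrec : ∀ N k, s N (k + 1) =
      s N k * (1 - (T / N) * lam) ^ 2 + α ^ 2 * (T / N)) :
    Tendsto (fun N : ℕ => s N N) atTop
      (nhds ((α ^ 2 / (2 * lam)) * (1 - Real.exp (-2 * lam * T)))) := by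
  have hmain : Tendsto (fun N : ℕ =>
      α ^ 2 / (lam * (2 - T / N * lam)) * (1 - ((1 + (-(lam * T)) / N) ^ N) ^ 2))
      atTop (nhds ((α ^ 2 / (2 * lam)) * (1 - Real.exp (-2 * lam * T)))) := by
    have h1 : Tendsto (fun N : ℕ => T / N * lam) atTop (nhds 0) := by
      simpa using (tendsto_const_div_atTop_nhds_zero_nat T).mul_const lam
    have h2 : Tendsto (fun N : ℕ => ((1 + (-(lam * T)) / N) ^ N) ^ 2) atTop
        (nhds (Real.exp (-(lam * T)) ^ 2)) :=
      (Real.tendsto_one_add_div_pow_exp (-(lam * T))).pow 2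
    have hc : Tendsto (fun _ : ℕ => (2 : ℝ)) atTop (nhds 2) := tendsto_const_nhds
    have hden : Tendsto (fun N : ℕ => lam * (2 - T / N * lam)) atTop (nhds (lam * 2)) := by
      have := (hc.sub h1).const_mul lam
      simpa using this
    have hne : lam * 2 ≠ 0 := by positivity
    have hA : Tendsto (fun _ : ℕ => α ^ 2) atTop (nhds (α ^ 2)) := tendsto_const_nhds
    have hone : Tendsto (fun _ : ℕ => (1 : ℝ)) atTop (nhds 1) := tendsto_const_nhds
    have := (hA.div hden hne).mul (hone.sub h2)
    simp only [Pi.div_apply] at this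
    convert this using 2
    have hexp : Real.exp (-(lam * T)) ^ 2 = Real.exp (-2 * lam * T) := by
      rw [← Real.exp_nat_mul]; ring_nf
    rw [hexp]; ring
  refine Tendsto.congr' ?_ hmain
  filter_upwards [eventually_gt_atTop (⌈lam * T⌉₊)] with N hN
  have hNpos : (0 : ℝ) < N := by
    have : (0:ℕ) ≤ ⌈lam * T⌉₊ := Nat.zero_le _
    exact_mod_cast Nat.lt_of_le_of_lt this hN
  have hlt : lam * T / N < 1 := by
    rw [div_lt_one hNpos]
    calc lam * T ≤ (⌈lam * T⌉₊ : ℝ) := Nat.le_ceil _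
    _ < N := by exact_mod_cast hN
  have heta : T / N * lam = lam * T / N := by ring
  have hetapos : 0 < T / N * lam := by positivity
  have h2pos : (0:ℝ) < 2 - T / N * lam := by rw [heta]; linarith
  have hd : (1 : ℝ) - (1 - (T / N) * lam) ^ 2 ≠ 0 := by
    have h : (1 : ℝ) - (1 - (T / N) * lam) ^ 2 = (T / N * lam) * (2 - T / N * lam) := by ring
    rw [h]; positivity
  show α ^ 2 / (lam * (2 - T / N * lam)) * (1 - ((1 + (-(lam * T)) / N) ^ N) ^ 2) = s N N
  rw [closed_form lam α T s N (h0 N) (hrec N) hd N]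
  have hr : (1 : ℝ) + (-(lam * T)) / N = 1 - (T / N) * lam := by
    rw [heta]; ring
  rw [hr, ← pow_mul, Nat.mul_comm N 2]
  have hsplit : (1 : ℝ) - (1 - (T / N) * lam) ^ 2 = (T / N * lam) * (2 - T / N * lam) := by
    ring
  rw [hsplit]
  have key : α ^ 2 * (T / N) / (T / N * lam * (2 - T / N * lam))
      = α ^ 2 / (lam * (2 - T / N * lam)) := by
    rw [div_eq_div_iff (by positivity) (by positivity)]
    ring
  rw [key]
end

section
/- Let L be a symmetric PSD Laplacian with eigenvalues 0 = λ₁ < λ₂ ≤ … ≤ λₙ and fix T > 0, α > 0. The limit as N → ∞ of the covariance recursion Σ^{(k+1)} = (I − (T/N)L)Σ^{(k)}(I − (T/N)L)ᵀ + α²(T/N)I after N steps from Σ^{(0)} = 0 equals U diag(α²T, θ₂, …, θₙ) Uᵀ, where θᵢ = (α²/(2λᵢ))(1 − e^{−2λᵢT}) and U diagonalizes L. -/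
open Matrix Filter

lemma covrec_closed {n : ℕ} (L U : Matrix (Fin n) (Fin n) ℝ) (lam : Fin n → ℝ)
    (hU : U * Uᵀ = 1) (hUL : L = U * Matrix.diagonal lam * Uᵀ)
    (c t : ℝ)
    (S : ℕ → Matrix (Fin n) (Fin n) ℝ) (h0 : S 0 = 0)
    (hrec : ∀ k, S (k+1) = ((1 : Matrix (Fin n) (Fin n) ℝ) - t • L) * S k *
      ((1 : Matrix (Fin n) (Fin n) ℝ) - t • L)ᵀ + c • 1) :
    ∀ k, S k = U * Matrix.diagonal
      (fun i => ∑ j ∈ Finset.range k, c * ((1 - t * lam i)^2)^j) * Uᵀ := by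
  have hUtU : Uᵀ * U = 1 := mul_eq_one_comm.mp hU
  have key : ∀ a b : Fin n → ℝ, (U * Matrix.diagonal a * Uᵀ) * (U * Matrix.diagonal b * Uᵀ)
      = U * Matrix.diagonal (fun i => a i * b i) * Uᵀ := by
    intro a b
    have h1 : Uᵀ * (U * (Matrix.diagonal b * Uᵀ)) = Matrix.diagonal b * Uᵀ := by
      rw [← Matrix.mul_assoc, hUtU, Matrix.one_mul]
    simp only [Matrix.mul_assoc, h1]
    rw [← Matrix.mul_assoc (Matrix.diagonal a), Matrix.diagonal_mul_diagonal]
  have hd : Matrix.diagonal (fun i => 1 - t * lam i)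
      = (1 : Matrix (Fin n) (Fin n) ℝ) - t • Matrix.diagonal lam := by
    ext i j
    by_cases h : i = j <;> simp [Matrix.diagonal_apply, h, Matrix.one_apply]
  have hA : (1 : Matrix (Fin n) (Fin n) ℝ) - t • L
      = U * Matrix.diagonal (fun i => 1 - t * lam i) * Uᵀ := by
    rw [hd, Matrix.mul_sub, Matrix.sub_mul, Matrix.mul_one, hU, Matrix.mul_smul,
      Matrix.smul_mul, hUL]
  have hc : (c • (1 : Matrix (Fin n) (Fin n) ℝ))
      = U * Matrix.diagonal (fun _ : Fin n => c) * Uᵀ := by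
    have : Matrix.diagonal (fun _ : Fin n => c) = c • (1 : Matrix (Fin n) (Fin n) ℝ) := by
      ext i j; by_cases h : i = j <;> simp [Matrix.diagonal_apply, h, Matrix.one_apply]
    rw [this, Matrix.mul_smul, Matrix.smul_mul, Matrix.mul_one, hU]
  intro k
  induction k with
  | zero => simp [h0]
  | succ k ih =>
    rw [hrec, ih, hA, Matrix.transpose_mul, Matrix.transpose_mul, Matrix.diagonal_transpose,
      Matrix.transpose_transpose, key, ← Matrix.mul_assoc U, key, hc,
      ← Matrix.add_mul, ← Matrix.mul_add, Matrix.diagonal_add]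
    have hfun : (fun i => ((1 - t * lam i) * ∑ j ∈ Finset.range k, c * ((1 - t * lam i)^2)^j)
          * (1 - t * lam i) + c)
        = fun i => ∑ j ∈ Finset.range (k+1), c * ((1 - t * lam i)^2)^j := by
      funext i
      rw [Finset.sum_range_succ']
      simp only [pow_zero, mul_one, Finset.mul_sum, Finset.sum_mul]
      congr 1
      refine Finset.sum_congr rfl fun j _ => ?_
      rw [pow_succ]
      ring
    rw [hfun]

/-- Limit of the covariance recursion: after N steps with step size T/N and N → ∞,
the covariance converges to U diag(α²T, θ₂,…,θₙ) Uᵀ with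
θᵢ = (α²/(2λᵢ))(1 − e^{−2λᵢT}). -/
theorem covariance_recursion_limit
    {n : ℕ} (L U : Matrix (Fin n) (Fin n) ℝ) (lam : Fin n → ℝ)
    (hU : U * Uᵀ = 1) (hUL : L = U * Matrix.diagonal lam * Uᵀ)
    (hpsd : L.PosSemidef) (hsymm : Lᵀ = L)
    (hn : 0 < n)
    (hlam0 : lam ⟨0, hn⟩ = 0) (hlampos : ∀ i : Fin n, i ≠ ⟨0, hn⟩ → 0 < lam i)
    (α T : ℝ) (hα : 0 < α) (hT : 0 < T)
    (S : ℕ → ℕ → Matrix (Fin n) (Fin n) ℝ) (h0 : ∀ N, S N 0 = 0)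
    (hrec : ∀ N k, S N (k + 1) =
      ((1 : Matrix (Fin n) (Fin n) ℝ) - (T / N) • L) * S N k *
        ((1 : Matrix (Fin n) (Fin n) ℝ) - (T / N) • L)ᵀ +
      (α ^ 2 * (T / N)) • (1 : Matrix (Fin n) (Fin n) ℝ)) :
    Tendsto (fun N : ℕ => S N N) atTop
      (nhds (U * Matrix.diagonal (fun i : Fin n =>
        if i = ⟨0, hn⟩ then α ^ 2 * T
        else (α ^ 2 / (2 * lam i)) * (1 - Real.exp (-2 * lam i * T))) * Uᵀ)) := by
  set θ : Fin n → ℝ := fun i =>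
    if i = ⟨0, hn⟩ then α ^ 2 * T
    else (α ^ 2 / (2 * lam i)) * (1 - Real.exp (-2 * lam i * T)) with hθ
  set F : ℕ → Fin n → ℝ := fun N i =>
    ∑ j ∈ Finset.range N, (α ^ 2 * (T / N)) * ((1 - (T / N) * lam i) ^ 2) ^ j with hF
  have hclosed : ∀ N : ℕ, S N N = U * Matrix.diagonal (F N) * Uᵀ := fun N =>
    covrec_closed L U lam hU hUL (α ^ 2 * (T / N)) (T / N) (S N) (h0 N) (hrec N) N
  have hFtend : ∀ i : Fin n, Tendsto (fun N : ℕ => F N i) atTop (nhds (θ i)) := by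
    intro i
    by_cases hi : i = ⟨0, hn⟩
    · -- zero eigenvalue
      subst hi
      have heq : ∀ᶠ N : ℕ in atTop, α ^ 2 * T = F N ⟨0, hn⟩ := by
        filter_upwards [eventually_ge_atTop 1] with N hN
        have hN' : (N : ℝ) ≠ 0 := Nat.cast_ne_zero.mpr (by omega)
        simp only [hF, hlam0, mul_zero, sub_zero, one_pow, mul_one, Finset.sum_const,
          Finset.card_range, nsmul_eq_mul]
        field_simp
      simp only [hθ, if_pos rfl]
      exact Tendsto.congr' heq tendsto_const_nhds
    · -- positive eigenvalue
      have hl : 0 < lam i := hlampos i hi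
      set μ := lam i with hμ
      have hnum : Tendsto (fun N : ℕ =>
          α ^ 2 * (1 - ((1 + (-(T * μ)) / N) ^ N) ^ 2))
          atTop (nhds (α ^ 2 * (1 - Real.exp (-(T * μ)) ^ 2))) :=
        tendsto_const_nhds.mul (tendsto_const_nhds.sub
          ((Real.tendsto_one_add_div_pow_exp (-(T * μ))).pow 2))
      have hden : Tendsto (fun N : ℕ => μ * (2 - T * μ / N))
          atTop (nhds (μ * (2 - 0))) :=
        tendsto_const_nhds.mul (tendsto_const_nhds.sub
          (tendsto_const_div_atTop_nhds_zero_nat (T * μ)))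
      have hden0 : μ * (2 - 0) ≠ 0 := by positivity
      have hG := hnum.div hden hden0
      have hval : α ^ 2 * (1 - Real.exp (-(T * μ)) ^ 2) / (μ * (2 - 0)) = θ i := by
        have he : Real.exp (-(T * μ)) ^ 2 = Real.exp (-2 * μ * T) := by
          rw [← Real.exp_nat_mul]
          congr 1
          push_cast
          ring
        have hμ0 : μ ≠ 0 := ne_of_gt hl
        rw [he]
        simp only [hθ, if_neg hi, ← hμ]
        rw [sub_zero, div_mul_eq_mul_div, mul_comm μ 2, ← div_div]
      rw [hval] at hG
      refine Tendsto.congr' ?_ hG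
      obtain ⟨M, hM⟩ := exists_nat_gt (T * μ)
      filter_upwards [eventually_ge_atTop (M + 1)] with N hN
      have hNpos : 0 < N := by omega
      have hN' : (0 : ℝ) < (N : ℝ) := by exact_mod_cast hNpos
      have hTN : T * μ < N := lt_of_lt_of_le hM (by exact_mod_cast (by omega : M ≤ N))
      set x : ℝ := T * μ / N with hx
      have hx0 : 0 < x := by positivity
      have hx1 : x < 1 := (div_lt_one hN').mpr hTN
      have hr1 : (1 - x) ^ 2 < 1 := by nlinarith
      have hrne : (1 - x) ^ 2 ≠ 1 := ne_of_lt hr1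
      have hxT : (T / N) * μ = x := by rw [hx]; ring
      have hpow : ((1 + (-(T * μ)) / N) ^ N) ^ 2 = ((1 - x) ^ 2) ^ N := by
        rw [← pow_mul, ← pow_mul, Nat.mul_comm]
        congr 1
        rw [hx]
        ring
      have hFe : F N i = ∑ j ∈ Finset.range N,
          (α ^ 2 * (T / N)) * ((1 - x) ^ 2) ^ j := by
        simp only [hF, ← hμ, hxT]
      have hμ0 : μ ≠ 0 := ne_of_gt hl
      have hN0 : (N : ℝ) ≠ 0 := ne_of_gt hN'
      have h2x : (2 : ℝ) - x ≠ 0 := by linarith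
      have hx0' : x ≠ 0 := ne_of_gt hx0
      have hTx : T / (N : ℝ) = x / μ := by
        rw [hx]
        field_simp
      simp only [Pi.div_apply]
      rw [hpow, hFe, ← Finset.mul_sum, geom_sum_eq hrne, ← hx, hTx]
      have hden2 : (1 - x) ^ 2 - 1 = -(x * (2 - x)) := by ring
      rw [hden2]
      field_simp
      ring
  have hdiag : Tendsto (fun N : ℕ => Matrix.diagonal (F N)) atTop
      (nhds (Matrix.diagonal θ)) := by
    apply tendsto_pi_nhds.mpr
    intro i
    rw [tendsto_pi_nhds]
    intro j
    by_cases hij : i = j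
    · subst hij
      simpa [Matrix.diagonal_apply_eq] using hFtend i
    · simpa [Matrix.diagonal_apply_ne _ hij] using tendsto_const_nhds
  have hmul : Tendsto (fun N : ℕ => U * Matrix.diagonal (F N) * Uᵀ) atTop
      (nhds (U * Matrix.diagonal θ * Uᵀ)) :=
    (tendsto_const_nhds.mul hdiag).mul tendsto_const_nhds
  exact hmul.congr fun N => (hclosed N).symm
end
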